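/- Assume in addition that (b²β² − a²α²) sin η₀ cos η₀ ≠ 0, set k₁ = (b²β² − a²α²) sin η₀ cos η₀ / (p² q), T(t) = γ'(t)/p, and define the unit normal of γ in M by N(t) = (T'(t) − ⟨T'(t), n(γ(t))⟩ n(γ(t))) / (p k₁). Then the second curvature scalar (torsion) of γ with respect to M is constant: for all t, ‖(1/p)(N'(t) − ⟨N'(t), n(γ(t))⟩ n(γ(t))) + k₁ T(t)‖ = a b |α β| / (p² q). (The covariant derivative DN/ds on M with respect to arclength is (1/p)(N' − ⟨N', n⟩n), and k₂ = ‖DN/ds + k₁ T‖.) -/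

import Mathlib

open Real
open scoped RealInnerProductSpace

lemma hasDerivAt_euclid {ι : Type*} [Fintype ι] (f : ℝ → EuclideanSpace ℝ ι)
    (v : EuclideanSpace ℝ ι) (t : ℝ)
    (h : ∀ i, HasDerivAt (fun t => f t i) (v i) t) : HasDerivAt f v t := by
  let L := PiLp.continuousLinearEquiv 2 ℝ (fun _ : ι => ℝ)
  have h2 : HasDerivAt (fun t => L (f t)) (L v) t := hasDerivAt_pi.2 h
  have h3 := (L.symm : (ι → ℝ) →L[ℝ] EuclideanSpace ℝ ι).hasFDerivAt.comp_hasDerivAt t h2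
  have h4 : HasDerivAt (fun t => L.symm (L (f t))) (L.symm (L v)) t := h3
  simp only [ContinuousLinearEquiv.symm_apply_apply] at h4
  exact h4

lemma hd_mulcos (k r u : ℝ) (v : ℝ) (hv : v = -(k * r * Real.sin (r * u))) :
    HasDerivAt (fun t => k * Real.cos (r * t)) v u := by
  have := (((hasDerivAt_id u).const_mul r).cos).const_mul k
  refine this.congr_deriv ?_
  rw [hv]; simp; ring

lemma hd_mulsin (k r u : ℝ) (v : ℝ) (hv : v = k * r * Real.cos (r * u)) :
    HasDerivAt (fun t => k * Real.sin (r * t)) v u := by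
  have := (((hasDerivAt_id u).const_mul r).sin).const_mul k
  refine this.congr_deriv ?_
  rw [hv]; simp; ring

lemma hd_negmulcos (k r u : ℝ) (v : ℝ) (hv : v = k * r * Real.sin (r * u)) :
    HasDerivAt (fun t => -(k * Real.cos (r * t))) v u := by
  have := (hd_mulcos k r u _ rfl).neg
  refine this.congr_deriv ?_
  rw [hv]; ring

lemma hd_negmulsin (k r u : ℝ) (v : ℝ) (hv : v = -(k * r * Real.cos (r * u))) :
    HasDerivAt (fun t => -(k * Real.sin (r * t))) v u := by
  rw [hv]
  exact (hd_mulsin k r u _ rfl).neg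

set_option maxHeartbeats 1000000 in
/-- For the curve `γ` on the degenerate 3-ellipsoid `M` in ℝ⁴, with constant geodesic
curvature `k₁ = (b²β² − a²α²) sin η₀ cos η₀ / (p² q) ≠ 0` and unit normal
`N = (T' − ⟨T', n∘γ⟩ n∘γ)/(p k₁)` in `M`, the torsion of `γ` with respect to `M` is the
constant `ab|αβ| / (p² q)`: for all `t`,
`‖(1/p)(N' − ⟨N', n(γ)⟩ n(γ)) + k₁ T‖ = ab|αβ|/(p²q)`. -/
theorem ellipsoid_curve_constant_torsion
    (a b η₀ α β : ℝ) (ha : 0 < a) (hb : 0 < b) (hη₀ : η₀ ∈ Set.Ioo 0 (Real.pi / 2))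
    (hαβ : ¬(α = 0 ∧ β = 0))
    (M : Set (EuclideanSpace ℝ (Fin 4)))
    (hM : M = {x : EuclideanSpace ℝ (Fin 4) |
        ((x 0) ^ 2 + (x 1) ^ 2) / a ^ 2 + ((x 2) ^ 2 + (x 3) ^ 2) / b ^ 2 = 1})
    (ν n : EuclideanSpace ℝ (Fin 4) → EuclideanSpace ℝ (Fin 4))
    (hν : ∀ x, ν x = ![x 0 / a ^ 2, x 1 / a ^ 2, x 2 / b ^ 2, x 3 / b ^ 2])
    (hn : ∀ x, n x = ‖ν x‖⁻¹ • ν x)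
    (γ : ℝ → EuclideanSpace ℝ (Fin 4))
    (hγ : ∀ t, γ t = ![a * Real.sin η₀ * Real.cos (α * t), a * Real.sin η₀ * Real.sin (α * t),
        b * Real.cos η₀ * Real.cos (β * t), b * Real.cos η₀ * Real.sin (β * t)])
    (p q : ℝ)
    (hp : p = Real.sqrt (a ^ 2 * α ^ 2 * Real.sin η₀ ^ 2 + b ^ 2 * β ^ 2 * Real.cos η₀ ^ 2))
    (hq : q = Real.sqrt (a ^ 2 * Real.cos η₀ ^ 2 + b ^ 2 * Real.sin η₀ ^ 2))
    (hne : (b ^ 2 * β ^ 2 - a ^ 2 * α ^ 2) * Real.sin η₀ * Real.cos η₀ ≠ 0)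
    (k₁ : ℝ) (hk₁ : k₁ = (b ^ 2 * β ^ 2 - a ^ 2 * α ^ 2) * Real.sin η₀ * Real.cos η₀ / (p ^ 2 * q))
    (T : ℝ → EuclideanSpace ℝ (Fin 4)) (hT : ∀ t, T t = p⁻¹ • deriv γ t)
    (N : ℝ → EuclideanSpace ℝ (Fin 4))
    (hN : ∀ t, N t = (p * k₁)⁻¹ • (deriv T t - ⟪deriv T t, n (γ t)⟫ • n (γ t))) :
    ∀ t, ‖(1 / p) • (deriv N t - ⟪deriv N t, n (γ t)⟫ • n (γ t)) + k₁ • T t‖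
        = a * b * |α * β| / (p ^ 2 * q) := by
  obtain ⟨hη1, hη2⟩ := hη₀
  set s := Real.sin η₀ with hs_def
  set c := Real.cos η₀ with hc_def
  have hs : 0 < s := Real.sin_pos_of_pos_of_lt_pi hη1 (by linarith [Real.pi_pos])
  have hc : 0 < c := Real.cos_pos_of_mem_Ioo ⟨by linarith [Real.pi_pos], hη2⟩
  have hsc : s ^ 2 + c ^ 2 = 1 := Real.sin_sq_add_cos_sq η₀
  have hq2 : q ^ 2 = a ^ 2 * c ^ 2 + b ^ 2 * s ^ 2 := by
    rw [hq]; rw [Real.sq_sqrt]; positivity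
  have hq0 : 0 < q := by rw [hq]; apply Real.sqrt_pos.2; positivity
  have hD : b ^ 2 * β ^ 2 - a ^ 2 * α ^ 2 ≠ 0 := fun h => hne (by rw [h]; ring)
  have hp2 : p ^ 2 = a ^ 2 * α ^ 2 * s ^ 2 + b ^ 2 * β ^ 2 * c ^ 2 := by
    rw [hp]; rw [Real.sq_sqrt]; positivity
  have hpos : 0 < a ^ 2 * α ^ 2 * s ^ 2 + b ^ 2 * β ^ 2 * c ^ 2 := by
    rcases eq_or_ne α 0 with h1 | h1
    · have h2 : β ≠ 0 := by
        intro h2; exact hD (by rw [h1, h2]; ring)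
      have : 0 < b ^ 2 * β ^ 2 * c ^ 2 := by positivity
      nlinarith [sq_nonneg (a * α * s)]
    · have : 0 < a ^ 2 * α ^ 2 * s ^ 2 := by positivity
      nlinarith [sq_nonneg (b * β * c)]
  have hp0 : 0 < p := by rw [hp]; exact Real.sqrt_pos.2 hpos
  have hk0 : k₁ ≠ 0 := by
    rw [hk₁]
    exact div_ne_zero hne (by positivity)
  -- derivative of γ
  have hγfun : γ = fun u => (WithLp.toLp 2 ![a * s * Real.cos (α * u), a * s * Real.sin (α * u),
      b * c * Real.cos (β * u), b * c * Real.sin (β * u)] : EuclideanSpace ℝ (Fin 4)) :=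
    funext fun u => by rw [← hγ u]
  have hdγ : ∀ u, HasDerivAt γ
      (WithLp.toLp 2 ![-(a * s * α * Real.sin (α * u)), a * s * α * Real.cos (α * u),
        -(b * c * β * Real.sin (β * u)), b * c * β * Real.cos (β * u)] :
        EuclideanSpace ℝ (Fin 4)) u := by
    intro u
    rw [hγfun]
    apply hasDerivAt_euclid
    intro i
    fin_cases i
    · exact hd_mulcos _ _ _ _ (by simp)
    · exact hd_mulsin _ _ _ _ (by simp)
    · exact hd_mulcos _ _ _ _ (by simp)
    · exact hd_mulsin _ _ _ _ (by simp)
  have hTfun : T = fun u => (WithLp.toLp 2 ![-(a * s * α / p * Real.sin (α * u)), a * s * α / p * Real.cos (α * u),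
      -(b * c * β / p * Real.sin (β * u)), b * c * β / p * Real.cos (β * u)] :
      EuclideanSpace ℝ (Fin 4)) := by
    funext u
    rw [hT u, (hdγ u).deriv]
    ext i
    fin_cases i <;> simp [PiLp.smul_apply, smul_eq_mul] <;> ring
  have hdT : ∀ u, HasDerivAt T
      (WithLp.toLp 2 ![-(a * s * α ^ 2 / p * Real.cos (α * u)), -(a * s * α ^ 2 / p * Real.sin (α * u)),
        -(b * c * β ^ 2 / p * Real.cos (β * u)), -(b * c * β ^ 2 / p * Real.sin (β * u))] :
        EuclideanSpace ℝ (Fin 4)) u := by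
    intro u
    rw [hTfun]
    apply hasDerivAt_euclid
    intro i
    fin_cases i
    · show HasDerivAt _ (-(a * s * α ^ 2 / p * Real.cos (α * u))) u
      exact hd_negmulsin _ _ _ _ (by ring)
    · show HasDerivAt _ (-(a * s * α ^ 2 / p * Real.sin (α * u))) u
      exact hd_mulcos _ _ _ _ (by ring)
    · show HasDerivAt _ (-(b * c * β ^ 2 / p * Real.cos (β * u))) u
      exact hd_negmulsin _ _ _ _ (by ring)
    · show HasDerivAt _ (-(b * c * β ^ 2 / p * Real.sin (β * u))) u
      exact hd_mulcos _ _ _ _ (by ring)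
  have hnγ : ∀ u, n (γ u) = (WithLp.toLp 2 ![b * s / q * Real.cos (α * u), b * s / q * Real.sin (α * u),
      a * c / q * Real.cos (β * u), a * c / q * Real.sin (β * u)] :
      EuclideanSpace ℝ (Fin 4)) := by
    intro u
    have hν1 : ν (γ u) = (WithLp.toLp 2 ![s / a * Real.cos (α * u), s / a * Real.sin (α * u),
        c / b * Real.cos (β * u), c / b * Real.sin (β * u)] : EuclideanSpace ℝ (Fin 4)) := by
      ext i
      simp only [hν]
      fin_cases i <;> simp [hγ u] <;> field_simp <;> ring
    have key : (s / a * Real.cos (α * u)) ^ 2 + (s / a * Real.sin (α * u)) ^ 2 +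
        ((c / b * Real.cos (β * u)) ^ 2 + (c / b * Real.sin (β * u)) ^ 2)
        = (q / (a * b)) ^ 2 := by
      have h1 := Real.sin_sq_add_cos_sq (α * u)
      have h2 := Real.sin_sq_add_cos_sq (β * u)
      field_simp
      linear_combination (-1) * hq2 + (b^2*s^2) * h1 + (a^2*c^2) * (Real.sin_sq_add_cos_sq (u * β))
    have hνn : ‖ν (γ u)‖ = q / (a * b) := by
      rw [hν1, EuclideanSpace.norm_eq]
      simp only [Fin.sum_univ_four, Real.norm_eq_abs, sq_abs, Matrix.cons_val_zero,
        Matrix.cons_val_one, Matrix.head_cons, Matrix.cons_val_two, Matrix.tail_cons,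
        Matrix.cons_val_three]
      rw [show (s / a * Real.cos (α * u)) ^ 2 + (s / a * Real.sin (α * u)) ^ 2 +
        (c / b * Real.cos (β * u)) ^ 2 + (c / b * Real.sin (β * u)) ^ 2
          = (q / (a * b)) ^ 2 by rw [← key]; ring]
      exact Real.sqrt_sq (by positivity)
    rw [hn, hνn, hν1]
    ext i
    fin_cases i <;> simp [PiLp.smul_apply, smul_eq_mul] <;> field_simp <;> ring
  have hI : ∀ u, ⟪deriv T u, n (γ u)⟫ = -(a * b * (α ^ 2 * s ^ 2 + β ^ 2 * c ^ 2)) / (p * q) := by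
    intro u
    rw [(hdT u).deriv, hnγ u]
    have h1 := Real.sin_sq_add_cos_sq (α * u)
    have h2 := Real.sin_sq_add_cos_sq (β * u)
    simp only [PiLp.inner_apply, RCLike.inner_apply, conj_trivial, Fin.sum_univ_four,
      Matrix.cons_val_zero, Matrix.cons_val_one, Matrix.head_cons, Matrix.cons_val_two,
      Matrix.tail_cons, Matrix.cons_val_three]
    linear_combination (-(a*b*s^2*α^2)/(p*q)) * h1 + (-(a*b*c^2*β^2)/(p*q)) * h2
  have e1 : p ^ 2 + s ^ 2 * (b ^ 2 * β ^ 2 - a ^ 2 * α ^ 2) = b ^ 2 * β ^ 2 := by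
    rw [hp2]; linear_combination (b ^ 2 * β ^ 2) * hsc
  have e2 : p ^ 2 - c ^ 2 * (b ^ 2 * β ^ 2 - a ^ 2 * α ^ 2) = a ^ 2 * α ^ 2 := by
    rw [hp2]; linear_combination (a ^ 2 * α ^ 2) * hsc
  have hNfun : N = fun u => (WithLp.toLp 2 ![a * c / q * Real.cos (α * u), a * c / q * Real.sin (α * u),
      -(b * s / q * Real.cos (β * u)), -(b * s / q * Real.sin (β * u))] :
      EuclideanSpace ℝ (Fin 4)) := by
    funext u
    rw [hN u, hI u, (hdT u).deriv, hnγ u]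
    ext i
    have hpq : p * k₁ = (b ^ 2 * β ^ 2 - a ^ 2 * α ^ 2) * s * c / (p * q) := by
      rw [hk₁]; field_simp
    fin_cases i <;>
      simp only [PiLp.smul_apply, PiLp.sub_apply, smul_eq_mul, Fin.zero_eta, Fin.mk_one,
        Matrix.cons_val_zero,
        Matrix.cons_val_one, Matrix.head_cons, Matrix.cons_val_two, Matrix.tail_cons,
        Matrix.cons_val_three, Fin.reduceFinMk, hpq]
    case _ => field_simp; linear_combination (-(α^2*Real.cos (α*u))) * hq2
    case _ => field_simp; linear_combination (-(α^2*Real.sin (α*u))) * hq2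
    case _ => field_simp; linear_combination (-(β^2*Real.cos (β*u))) * hq2
    case _ => field_simp; linear_combination (-(β^2*Real.sin (β*u))) * hq2
  have hdN : ∀ u, HasDerivAt N
      (WithLp.toLp 2 ![-(a * c * α / q * Real.sin (α * u)), a * c * α / q * Real.cos (α * u),
        b * s * β / q * Real.sin (β * u), -(b * s * β / q * Real.cos (β * u))] :
        EuclideanSpace ℝ (Fin 4)) u := by
    intro u
    rw [hNfun]
    apply hasDerivAt_euclid
    intro i
    fin_cases i
    · show HasDerivAt _ (-(a * c * α / q * Real.sin (α * u))) u
      exact hd_mulcos _ _ _ _ (by ring)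
    · show HasDerivAt _ (a * c * α / q * Real.cos (α * u)) u
      exact hd_mulsin _ _ _ _ (by ring)
    · show HasDerivAt _ (b * s * β / q * Real.sin (β * u)) u
      exact hd_negmulcos _ _ _ _ (by ring)
    · show HasDerivAt _ (-(b * s * β / q * Real.cos (β * u))) u
      exact hd_negmulsin _ _ _ _ (by ring)
  have hI2 : ∀ u, ⟪deriv N u, n (γ u)⟫ = 0 := by
    intro u
    rw [(hdN u).deriv, hnγ u]
    simp only [PiLp.inner_apply, RCLike.inner_apply, conj_trivial, Fin.sum_univ_four,
      Matrix.cons_val_zero, Matrix.cons_val_one, Matrix.head_cons, Matrix.cons_val_two,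
      Matrix.tail_cons, Matrix.cons_val_three]
    ring
  have hK0 : (1 / p) * (a * c * α / q) + k₁ * (a * s * α / p)
      = a * α * c * (b ^ 2 * β ^ 2) / (p ^ 3 * q) := by
    rw [hk₁]; field_simp; linear_combination α * e1
  have hK2 : (1 / p) * (b * s * β / q) - k₁ * (b * c * β / p)
      = b * β * s * (a ^ 2 * α ^ 2) / (p ^ 3 * q) := by
    rw [hk₁]; field_simp; linear_combination β * e2
  intro t
  rw [hI2 t, (hdN t).deriv, hTfun]
  simp only [zero_smul, sub_zero]
  rw [EuclideanSpace.norm_eq]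
  simp only [Fin.sum_univ_four, PiLp.add_apply, PiLp.smul_apply, smul_eq_mul,
    Matrix.cons_val_zero, Matrix.cons_val_one, Matrix.head_cons, Matrix.cons_val_two,
    Matrix.tail_cons, Matrix.cons_val_three, Real.norm_eq_abs, sq_abs]
  rw [show (1 / p * -(a * c * α / q * Real.sin (α * t)) + k₁ * -(a * s * α / p * Real.sin (α * t))) ^ 2 +
            (1 / p * (a * c * α / q * Real.cos (α * t)) + k₁ * (a * s * α / p * Real.cos (α * t))) ^ 2 +
          (1 / p * (b * s * β / q * Real.sin (β * t)) + k₁ * -(b * c * β / p * Real.sin (β * t))) ^ 2 +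
        (1 / p * -(b * s * β / q * Real.cos (β * t)) + k₁ * (b * c * β / p * Real.cos (β * t))) ^ 2
      = (a * b * |α * β| / (p ^ 2 * q)) ^ 2 from ?_]
  · exact Real.sqrt_sq (by positivity)
  have h1 := Real.sin_sq_add_cos_sq (α * t)
  have h2 := Real.sin_sq_add_cos_sq (β * t)
  calc (1 / p * -(a * c * α / q * Real.sin (α * t)) + k₁ * -(a * s * α / p * Real.sin (α * t))) ^ 2 +
            (1 / p * (a * c * α / q * Real.cos (α * t)) + k₁ * (a * s * α / p * Real.cos (α * t))) ^ 2 +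
          (1 / p * (b * s * β / q * Real.sin (β * t)) + k₁ * -(b * c * β / p * Real.sin (β * t))) ^ 2 +
        (1 / p * -(b * s * β / q * Real.cos (β * t)) + k₁ * (b * c * β / p * Real.cos (β * t))) ^ 2
      = ((1 / p) * (a * c * α / q) + k₁ * (a * s * α / p)) ^ 2 *
          (Real.sin (α * t) ^ 2 + Real.cos (α * t) ^ 2) +
        ((1 / p) * (b * s * β / q) - k₁ * (b * c * β / p)) ^ 2 *
          (Real.sin (β * t) ^ 2 + Real.cos (β * t) ^ 2) := by ring
    _ = (a * α * c * (b ^ 2 * β ^ 2) / (p ^ 3 * q)) ^ 2 +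
        (b * β * s * (a ^ 2 * α ^ 2) / (p ^ 3 * q)) ^ 2 := by rw [h1, h2, hK0, hK2]; ring
    _ = (a * b * |α * β| / (p ^ 2 * q)) ^ 2 := by
        rw [show (a * b * |α * β| / (p ^ 2 * q)) ^ 2 = (a * b * (α * β) / (p ^ 2 * q)) ^ 2 by
          rw [div_pow, div_pow, mul_pow, mul_pow, sq_abs]; ring]
        field_simp
        linear_combination (-(α ^ 2 * β ^ 2)) * hp2
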